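/- If N₂ = 1, then C(r,N) is an [(r-1)/N, m] code over GF(q) whose every nonzero codeword has weight q^{m-1}(q-1)/N. -/

import Mathlib

open scoped Classical

section Helpers

lemma fiber_card_eq {G H : Type*} [Group G] [Fintype G] [Group H] [DecidableEq H]
    (f : G →* H) {x y : H} (gx : G) (hgx : f gx = x) (gy : G) (hgy : f gy = y) :
    (Finset.univ.filter fun g => f g = x).card = (Finset.univ.filter fun g => f g = y).card := by
  apply Finset.card_bij' (fun g _ => gy * gx⁻¹ * g) (fun g _ => gx * gy⁻¹ * g)
  · intro a ha
    simp only [Finset.mem_filter, Finset.mem_univ, true_and] at ha ⊢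
    rw [map_mul, map_mul, map_inv, ha, hgx, hgy, inv_mul_cancel_right]
  · intro a ha
    simp only [Finset.mem_filter, Finset.mem_univ, true_and] at ha ⊢
    rw [map_mul, map_mul, map_inv, ha, hgx, hgy, inv_mul_cancel_right]
  · intro a _; group
  · intro a _; group

lemma card_eq_card_mul_fiber {G H : Type*} [Group G] [Fintype G] [Group H] [Fintype H]
    [DecidableEq H] (f : G →* H) (hf : Function.Surjective f) :
    Fintype.card G = Fintype.card H * (Finset.univ.filter fun g => f g = 1).card := by
  have h1 : (Finset.univ : Finset G).card
      = ∑ x ∈ (Finset.univ : Finset H), (Finset.univ.filter fun g => f g = x).card :=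
    Finset.card_eq_sum_card_fiberwise (fun g _ => Finset.mem_univ _)
  have h2 : ∀ x ∈ (Finset.univ : Finset H),
      (Finset.univ.filter fun g => f g = x).card = (Finset.univ.filter fun g => f g = 1).card := by
    intro x _
    exact fiber_card_eq f (hf x).choose (hf x).choose_spec 1 (map_one f)
  rw [← Finset.card_univ, h1, Finset.sum_congr rfl h2, Finset.sum_const, Finset.card_univ,
    smul_eq_mul]

lemma fiber_card_eq_add {G H : Type*} [AddGroup G] [Fintype G] [AddGroup H] [DecidableEq H]
    (f : G →+ H) {x y : H} (gx : G) (hgx : f gx = x) (gy : G) (hgy : f gy = y) :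
    (Finset.univ.filter fun g => f g = x).card = (Finset.univ.filter fun g => f g = y).card := by
  apply Finset.card_bij' (fun g _ => gy + -gx + g) (fun g _ => gx + -gy + g)
  · intro a ha
    simp only [Finset.mem_filter, Finset.mem_univ, true_and] at ha ⊢
    rw [map_add, map_add, map_neg, ha, hgx, hgy, neg_add_cancel_right]
  · intro a ha
    simp only [Finset.mem_filter, Finset.mem_univ, true_and] at ha ⊢
    rw [map_add, map_add, map_neg, ha, hgx, hgy, neg_add_cancel_right]
  · intro a _; simp [add_assoc]
  · intro a _; simp [add_assoc]

lemma card_eq_card_mul_fiber_add {G H : Type*} [AddGroup G] [Fintype G] [AddGroup H] [Fintype H]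
    [DecidableEq H] (f : G →+ H) (hf : Function.Surjective f) :
    Fintype.card G = Fintype.card H * (Finset.univ.filter fun g => f g = 0).card := by
  have h1 : (Finset.univ : Finset G).card
      = ∑ x ∈ (Finset.univ : Finset H), (Finset.univ.filter fun g => f g = x).card :=
    Finset.card_eq_sum_card_fiberwise (fun g _ => Finset.mem_univ _)
  have h2 : ∀ x ∈ (Finset.univ : Finset H),
      (Finset.univ.filter fun g => f g = x).card = (Finset.univ.filter fun g => f g = 0).card := by
    intro x _
    exact fiber_card_eq_add f (hf x).choose (hf x).choose_spec 0 (map_zero f)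
  rw [← Finset.card_univ, h1, Finset.sum_congr rfl h2, Finset.sum_const, Finset.card_univ,
    smul_eq_mul]

lemma exists_algebraMap_eq {K F : Type*} [Field K] [Fintype K] [Field F] [Fintype F] [Algebra K F]
    (x : F) (hx : x ^ Fintype.card K = x) : ∃ c : K, algebraMap K F c = x := by
  set q := Fintype.card K with hq
  have hq1 : 1 < q := Fintype.one_lt_card
  set S : Finset F := Finset.univ.filter fun y => y ^ q = y with hS
  set T : Finset F := Finset.univ.image (algebraMap K F) with hT
  have hTS : T ⊆ S := by
    intro y hy
    simp only [hT, Finset.mem_image, Finset.mem_univ, true_and] at hy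
    obtain ⟨c, rfl⟩ := hy
    simp only [hS, Finset.mem_filter, Finset.mem_univ, true_and]
    rw [← map_pow, FiniteField.pow_card]
  have hTcard : T.card = q := by
    rw [hT, Finset.card_image_of_injective _ (algebraMap K F).injective, Finset.card_univ, hq]
  have hdeg : (Polynomial.X ^ q - Polynomial.X : Polynomial F).natDegree = q := by
    rw [Polynomial.natDegree_sub_eq_left_of_natDegree_lt] <;>
      simp [Polynomial.natDegree_X_pow, Polynomial.natDegree_X, hq1]
  have hP : (Polynomial.X ^ q - Polynomial.X : Polynomial F) ≠ 0 := by
    intro h; rw [h] at hdeg; simp at hdeg; omega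
  have hScard : S.card ≤ q := by
    have hsub : S ⊆ (Polynomial.X ^ q - Polynomial.X : Polynomial F).roots.toFinset := by
      intro y hy
      simp only [hS, Finset.mem_filter, Finset.mem_univ, true_and] at hy
      simp [Polynomial.mem_roots, hP, sub_eq_zero, hy]
    calc S.card ≤ _ := Finset.card_le_card hsub
      _ ≤ (Polynomial.X ^ q - Polynomial.X : Polynomial F).roots.card :=
        Multiset.toFinset_card_le _
      _ ≤ _ := (Polynomial.card_roots' _)
      _ = q := hdeg
  have hTSeq : T = S := Finset.eq_of_subset_of_card_le hTS (hScard.trans hTcard.ge)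
  have hxS : x ∈ S := by simp [hS, hx]
  rw [← hTSeq] at hxS
  simp only [hT, Finset.mem_image, Finset.mem_univ, true_and] at hxS
  exact hxS

lemma card_ker_functional {K F : Type*} [Field K] [Fintype K] [Field F] [Fintype F] [Algebra K F]
    (f : F →ₗ[K] K) (hf : f ≠ 0) :
    Fintype.card F = Fintype.card K * (Finset.univ.filter fun x : F => f x = 0).card := by
  obtain ⟨x₀, hx₀⟩ : ∃ x, f x ≠ 0 := by
    by_contra h; push_neg at h; exact hf (LinearMap.ext fun x => by simp [h])
  have hsurj : Function.Surjective f.toAddMonoidHom := by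
    intro c
    refine ⟨(c * (f x₀)⁻¹) • x₀, ?_⟩
    show f _ = c
    rw [map_smul, smul_eq_mul, mul_assoc, inv_mul_cancel₀ hx₀, mul_one]
  exact card_eq_card_mul_fiber_add f.toAddMonoidHom hsurj

end Helpers

/-- The Hamming weight of the codeword `c(β) = (Tr_{r/q}(βθʲ))_{j=0}^{n-1}`. -/
noncomputable def codewordWeight (K F : Type) [Field K] [Field F] [Algebra K F]
    (θ : F) (n : ℕ) (β : F) : ℕ :=
  (Finset.univ.filter fun j : Fin n => Algebra.trace K F (β * θ ^ (j : ℕ)) ≠ 0).card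

/-- if `N₂ = 1` then `C(r,N)` is an `[(r-1)/N, m]` code (the map
`β ↦ c(β)` is injective, so the code has `q^m` codewords, i.e. dimension `m`)
and every nonzero codeword has weight `q^{m-1}(q-1)/N`. -/
theorem stmt16 (p s m N q r n : ℕ) (hp : p.Prime) (hs : 0 < s) (hm : 0 < m)
    (hq : q = p ^ s) (hr : r = q ^ m) (hN : N ∣ r - 1) (hn : n = (r - 1) / N)
    (hN₂ : Nat.gcd N ((r - 1) / (q - 1)) = 1)
    (K F : Type) [Field K] [Fintype K] [Field F] [Fintype F] [Algebra K F]
    (hcardK : Fintype.card K = q) (hcardF : Fintype.card F = r)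
    (α : Fˣ) (hα : ∀ x : Fˣ, x ∈ Subgroup.zpowers α)
    (hθ : ∀ x : F, x ∈ Algebra.adjoin K {((α ^ N : Fˣ) : F)}) :
    Function.Injective (fun β : F => fun j : Fin n =>
        Algebra.trace K F (β * ((α ^ N : Fˣ) : F) ^ (j : ℕ))) ∧
      ∀ β : Fˣ,
        N * codewordWeight K F ((α ^ N : Fˣ) : F) n (β : F) =
          q ^ (m - 1) * (q - 1) := by
  -- basic numerics
  have hq2 : 2 ≤ q := by
    rw [hq]; exact Nat.one_lt_pow hs.ne' hp.one_lt
  have hr2 : 2 ≤ r := by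
    rw [hr]; exact Nat.one_lt_pow hm.ne' hq2
  have hN0 : N ≠ 0 := by rintro rfl; rw [zero_dvd_iff] at hN; omega
  have hFD : Module.Finite K F := Module.Finite.of_finite
  have hcardU : Fintype.card Fˣ = r - 1 := by rw [Fintype.card_units, hcardF]
  have hordα : orderOf α = r - 1 := by
    rw [orderOf_eq_card_of_forall_mem_zpowers hα, Nat.card_eq_fintype_card, hcardU]
  have hordθ : orderOf (α ^ N) = n := by
    rw [orderOf_pow, hordα, Nat.gcd_eq_right hN, hn]
  have hNn : N * n = r - 1 := by rw [hn, Nat.mul_div_cancel' hN]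
  have hn0 : n ≠ 0 := by rintro rfl; rw [Nat.mul_zero] at hNn; omega
  have hcardH : Fintype.card (Subgroup.zpowers (α ^ N)) = n := by
    rw [Fintype.card_zpowers, hordθ]
  have hdvd : q - 1 ∣ r - 1 := by
    rw [hr]; simpa using Nat.sub_dvd_pow_sub_pow q 1 m
  -- the multiplication homomorphism ψ : Kˣ × ⟨θ⟩ →* Fˣ
  set ψ := (((Units.map (algebraMap K F).toMonoidHom).comp
          (MonoidHom.fst Kˣ (Subgroup.zpowers (α ^ N)))) *
        ((Subgroup.zpowers (α ^ N)).subtype.comp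
          (MonoidHom.snd Kˣ (Subgroup.zpowers (α ^ N))))) with hψdef
  have hψ : ∀ g : Kˣ × (Subgroup.zpowers (α ^ N)),
      ψ g = Units.map (algebraMap K F).toMonoidHom g.1 * (g.2 : Fˣ) := fun g => rfl
  -- surjectivity of ψ
  have hsurj : Function.Surjective ψ := by
    set v := (r - 1) / (q - 1) with hvdef
    have hv : v * (q - 1) = r - 1 := Nat.div_mul_cancel hdvd
    have hαv1 : (α ^ v) ^ (q - 1) = 1 := by
      rw [← pow_mul, hv, ← hordα, pow_orderOf_eq_one]
    have hwF : ((α ^ v : Fˣ) : F) ^ Fintype.card K = ((α ^ v : Fˣ) : F) := by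
      have h1 : ((α ^ v : Fˣ) : F) ^ (q - 1) = 1 := by
        rw [← Units.val_pow_eq_pow_val, hαv1, Units.val_one]
      have hq1 : Fintype.card K = (q - 1) + 1 := by rw [hcardK]; omega
      rw [hq1, pow_succ, h1, one_mul]
    obtain ⟨c, hc⟩ := exists_algebraMap_eq _ hwF
    have hc0 : c ≠ 0 := by
      rintro rfl
      rw [map_zero] at hc
      exact Units.ne_zero _ hc.symm
    have hcu : Units.map (algebraMap K F).toMonoidHom (Units.mk0 c hc0) = α ^ v :=
      Units.ext (by simpa using hc)
    have hb : (1 : ℤ) = N * Nat.gcdA N v + v * Nat.gcdB N v := by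
      have := Nat.gcd_eq_gcd_ab N v
      rw [hN₂] at this
      exact_mod_cast this
    have hα1 : (α ^ N) ^ Nat.gcdA N v * (α ^ v) ^ Nat.gcdB N v = α := by
      rw [← zpow_natCast α N, ← zpow_natCast α v, ← zpow_mul, ← zpow_mul, ← zpow_add, ← hb,
        zpow_one]
    have hαr : α ∈ ψ.range := by
      refine ⟨((Units.mk0 c hc0) ^ Nat.gcdB N v,
        ⟨(α ^ N) ^ Nat.gcdA N v, Subgroup.zpow_mem _ (Subgroup.mem_zpowers _) _⟩), ?_⟩
      rw [hψ]
      simp only [map_zpow, hcu]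
      rw [mul_comm]
      exact hα1
    intro x
    have hx := hα x
    rw [Subgroup.mem_zpowers_iff] at hx
    obtain ⟨kz, rfl⟩ := hx
    exact Subgroup.zpow_mem _ hαr kz
  -- the size of the fibers of ψ
  set k := (Finset.univ.filter
    fun g : Kˣ × (Subgroup.zpowers (α ^ N)) => ψ g = 1).card with hkdef
  have hkeq : (q - 1) * n = (r - 1) * k := by
    have h1 := card_eq_card_mul_fiber ψ hsurj
    rw [Fintype.card_prod, Fintype.card_units, hcardK, hcardH, hcardU, ← hkdef] at h1
    exact h1
  have hNk : N * k = q - 1 := by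
    have h2 : n * (q - 1) = n * (N * k) := by
      rw [mul_comm n, hkeq, ← hNn]; ring
    exact (Nat.eq_of_mul_eq_mul_left (Nat.pos_of_ne_zero hn0) h2).symm
  -- the count of elements of Fˣ with nonzero trace against β
  have htcard : ∀ β : Fˣ,
      (Finset.univ.filter fun x : Fˣ => Algebra.trace K F ((β : F) * (x : F)) ≠ 0).card
        = q ^ (m - 1) * (q - 1) := by
    intro β
    set f : F →ₗ[K] K := (Algebra.trace K F).comp (LinearMap.mulLeft K (β : F)) with hfdef
    have hfapp : ∀ x : F, f x = Algebra.trace K F ((β : F) * x) := fun x => rfl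
    have hf0 : f ≠ 0 := by
      obtain ⟨y, hy⟩ : ∃ y, Algebra.trace K F y ≠ 0 := by
        by_contra h; push_neg at h
        exact Algebra.trace_ne_zero K F (LinearMap.ext fun y => by simp [h])
      intro h
      apply hy
      have := congrArg (fun g : F →ₗ[K] K => g ((β⁻¹ : Fˣ) * y)) h
      simpa [hfapp, ← mul_assoc] using this
    have hZ := card_ker_functional f hf0
    rw [hcardK, hcardF, hr] at hZ
    set Z := (Finset.univ.filter fun x : F => f x = 0).card with hZdef
    have hq0 : 0 < q := by omega
    have hZval : Z = q ^ (m - 1) := by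
      have h1 : q ^ m = q * q ^ (m - 1) := by
        conv_lhs => rw [show m = (m - 1) + 1 by omega]
        ring
      rw [h1] at hZ
      exact Nat.eq_of_mul_eq_mul_left hq0 hZ.symm
    have hcompl : (Finset.univ.filter fun x : F => f x ≠ 0).card = q ^ m - q ^ (m - 1) := by
      have h3 := Finset.card_filter_add_card_filter_not (s := (Finset.univ : Finset F))
        (p := fun x : F => f x = 0)
      rw [Finset.card_univ, hcardF, hr, ← hZdef, hZval] at h3
      simp only [ne_eq]
      omega
    have hbij : (Finset.univ.filter fun x : Fˣ => Algebra.trace K F ((β : F) * (x : F)) ≠ 0).card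
        = (Finset.univ.filter fun x : F => f x ≠ 0).card := by
      refine Finset.card_bij (fun x _ => (x : F)) ?_ ?_ ?_
      · intro a ha
        simp only [Finset.mem_filter, Finset.mem_univ, true_and] at ha ⊢
        rw [hfapp]; exact ha
      · intro a _ b _ hab
        exact Units.ext hab
      · intro b hb
        simp only [Finset.mem_filter, Finset.mem_univ, true_and] at hb
        have hb0 : b ≠ 0 := by
          rintro rfl; apply hb; rw [hfapp, mul_zero, map_zero]
        refine ⟨Units.mk0 b hb0, ?_, rfl⟩
        simp only [Finset.mem_filter, Finset.mem_univ, true_and]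
        rw [← hfapp]; exact hb
    rw [hbij, hcompl]
    have h1 : q ^ m = q ^ (m - 1) * q := by
      conv_lhs => rw [show m = (m - 1) + 1 by omega]
      ring
    rw [h1, Nat.mul_sub, Nat.mul_one]
  -- the double-counting identity
  have hdouble : ∀ β : Fˣ,
      (q - 1) * codewordWeight K F ((α ^ N : Fˣ) : F) n (β : F)
        = q ^ (m - 1) * (q - 1) * k := by
    intro β
    set s := (Finset.univ.filter
      fun g : Kˣ × (Subgroup.zpowers (α ^ N)) =>
        Algebra.trace K F ((β : F) * ((ψ g : Fˣ) : F)) ≠ 0) with hsdef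
    set t := (Finset.univ.filter fun x : Fˣ => Algebra.trace K F ((β : F) * (x : F)) ≠ 0)
      with htdef
    have hC1 : s.card = t.card * k := by
      have h1 : s.card = ∑ x ∈ t, (s.filter fun g => ψ g = x).card := by
        apply Finset.card_eq_sum_card_fiberwise
        intro g hg
        simp only [hsdef, Finset.mem_coe, Finset.mem_filter, Finset.mem_univ, true_and] at hg
        simp only [htdef, Finset.mem_coe, Finset.mem_filter, Finset.mem_univ, true_and]
        exact hg
      have h2 : ∀ x ∈ t, (s.filter fun g => ψ g = x).card = k := by
        intro x hx
        simp only [htdef, Finset.mem_filter, Finset.mem_univ, true_and] at hx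
        have hss : s.filter (fun g => ψ g = x) = Finset.univ.filter fun g => ψ g = x := by
          ext g
          simp only [hsdef, Finset.mem_filter, Finset.mem_univ, true_and]
          constructor
          · rintro ⟨-, h⟩; exact h
          · rintro h; exact ⟨by rw [h]; exact hx, h⟩
        rw [hss, hkdef]
        exact fiber_card_eq ψ (hsurj x).choose (hsurj x).choose_spec
          (hsurj 1).choose (hsurj 1).choose_spec
      rw [h1, Finset.sum_congr rfl h2, Finset.sum_const, smul_eq_mul]
    have hC2 : s.card = (q - 1) * codewordWeight K F ((α ^ N : Fˣ) : F) n (β : F) := by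
      have hs2 : s = Finset.univ ×ˢ
          (Finset.univ.filter fun h : (Subgroup.zpowers (α ^ N)) =>
            Algebra.trace K F ((β : F) * ((h : Fˣ) : F)) ≠ 0) := by
        ext g
        simp only [hsdef, Finset.mem_filter, Finset.mem_univ, true_and, Finset.mem_product,
          true_and]
        rw [hψ g]
        have h4 : ((Units.map (algebraMap K F).toMonoidHom g.1 * (g.2 : Fˣ) : Fˣ) : F)
            = algebraMap K F (g.1 : K) * ((g.2 : Fˣ) : F) := by
          simp
        rw [h4]
        have heq : (β : F) * (algebraMap K F (g.1 : K) * ((g.2 : Fˣ) : F))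
            = (g.1 : K) • ((β : F) * ((g.2 : Fˣ) : F)) := by
          rw [Algebra.smul_def]; ring
        rw [heq, map_smul, smul_eq_mul]
        constructor
        · intro h hc; apply h; rw [hc, mul_zero]
        · intro h
          exact mul_ne_zero (Units.ne_zero g.1) h
      have hHw : (Finset.univ.filter
          fun h : (Subgroup.zpowers (α ^ N)) =>
            Algebra.trace K F ((β : F) * ((h : Fˣ) : F)) ≠ 0).card
          = codewordWeight K F ((α ^ N : Fˣ) : F) n (β : F) := by
        rw [codewordWeight]
        symm
        refine Finset.card_bij (fun j _ => (⟨(α ^ N) ^ (j : ℕ),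
          Subgroup.pow_mem _ (Subgroup.mem_zpowers _) _⟩ : (Subgroup.zpowers (α ^ N)))) ?_ ?_ ?_
        · intro j hj
          simp only [Finset.mem_filter, Finset.mem_univ, true_and] at hj ⊢
          rwa [← Units.val_pow_eq_pow_val] at hj
        · intro a _ b _ hab
          have h1 : (α ^ N) ^ (a : ℕ) = (α ^ N) ^ (b : ℕ) := Subtype.ext_iff.mp hab
          have := pow_injOn_Iio_orderOf (x := α ^ N)
            (by rw [hordθ]; exact a.isLt) (by rw [hordθ]; exact b.isLt) h1
          exact Fin.ext this
        · intro b hb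
          simp only [Finset.mem_filter, Finset.mem_univ, true_and] at hb
          obtain ⟨j, hj⟩ : ∃ j : ℕ, (α ^ N) ^ j = (b : Fˣ) :=
            (Submonoid.mem_powers_iff _ _).mp (mem_powers_iff_mem_zpowers.mpr b.2)
          refine ⟨⟨j % n, Nat.mod_lt _ (Nat.pos_of_ne_zero hn0)⟩, ?_, ?_⟩
          · simp only [Finset.mem_filter, Finset.mem_univ, true_and]
            rw [← Units.val_pow_eq_pow_val]
            have h5 : (α ^ N) ^ ((j % n : ℕ)) = (α ^ N) ^ j := by
              rw [← hordθ]; exact pow_mod_orderOf _ _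
            rw [h5, hj]
            exact hb
          · apply Subtype.ext
            show (α ^ N) ^ (j % n) = (b : Fˣ)
            rw [← hj, ← hordθ]
            exact pow_mod_orderOf _ _
      rw [hs2, Finset.card_product, hHw, Finset.card_univ, Fintype.card_units, hcardK]
    rw [← hC2, hC1, htcard β]
  -- the weight formula
  have hweight : ∀ β : Fˣ,
      N * codewordWeight K F ((α ^ N : Fˣ) : F) n (β : F) = q ^ (m - 1) * (q - 1) := by
    intro β
    apply Nat.eq_of_mul_eq_mul_left (show 0 < q - 1 by omega)
    calc (q - 1) * (N * codewordWeight K F ((α ^ N : Fˣ) : F) n (β : F))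
        = N * ((q - 1) * codewordWeight K F ((α ^ N : Fˣ) : F) n (β : F)) := by ring
      _ = N * (q ^ (m - 1) * (q - 1) * k) := by rw [hdouble β]
      _ = q ^ (m - 1) * (q - 1) * (N * k) := by ring
      _ = q ^ (m - 1) * (q - 1) * (q - 1) := by rw [hNk]
      _ = (q - 1) * (q ^ (m - 1) * (q - 1)) := by ring
  refine ⟨?_, hweight⟩
  -- injectivity
  intro β₁ β₂ h
  by_contra hne
  have hd0 : β₁ - β₂ ≠ 0 := sub_ne_zero.mpr hne
  set u : Fˣ := Units.mk0 (β₁ - β₂) hd0 with hudef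
  have hw := hweight u
  have hwpos : 0 < codewordWeight K F ((α ^ N : Fˣ) : F) n ((u : F)) := by
    rcases Nat.eq_zero_or_pos (codewordWeight K F ((α ^ N : Fˣ) : F) n ((u : F))) with h0 | h0
    · exfalso
      rw [h0, Nat.mul_zero] at hw
      have hpos : 0 < q ^ (m - 1) * (q - 1) :=
        Nat.mul_pos (Nat.pow_pos (by omega)) (by omega)
      omega
    · exact h0
  rw [codewordWeight, Finset.card_pos] at hwpos
  obtain ⟨j, hj⟩ := hwpos.exists_mem
  simp only [Finset.mem_filter, Finset.mem_univ, true_and] at hj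
  apply hj
  have hcongr := congrFun h j
  simp only at hcongr
  show Algebra.trace K F ((β₁ - β₂) * ((α ^ N : Fˣ) : F) ^ (j : ℕ)) = 0
  rw [sub_mul, map_sub, hcongr, sub_self]
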